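/- If H is a 4-Ore graph, then T(H) = 1 if and only if H is isomorphic to K4, where T(H) is the maximum number of vertex-disjoint cycles of length at most four in H. -/

import Mathlib

open SimpleGraph

/-- A graph is 4-critical if it is not 3-colorable but every proper subgraph is 3-colorable. -/
def FourCritical {V : Type*} (G : SimpleGraph V) : Prop :=
  ¬ G.Colorable 3 ∧ ∀ H : SimpleGraph V, H < G → H.Colorable 3

/-- `S` is the vertex set of a cycle of length at most four in `G`. -/
def ShortCycleSet {V : Type*} (G : SimpleGraph V) (S : Set V) : Prop :=
  ∃ (v : V) (w : G.Walk v v), w.IsCycle ∧ w.length ≤ 4 ∧ {x | x ∈ w.support} = S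

/-- `maxTri G` (the quantity `T(G)` of the paper) is the maximum number of pairwise
vertex-disjoint cycles of length at most four in `G`. -/
noncomputable def maxTri {V : Type*} (G : SimpleGraph V) : ℕ :=
  sSup {n | ∃ C : Finset (Set V), C.card = n ∧ (∀ S ∈ C, ShortCycleSet G S) ∧
    (C : Set (Set V)).Pairwise Disjoint}

/-- The potential `p(G) = 5|V(G)| - 3|E(G)| - T(G)`. -/
noncomputable def pot {V : Type*} (G : SimpleGraph V) : ℤ :=
  5 * (Nat.card V : ℤ) - 3 * (Nat.card G.edgeSet : ℤ) - (maxTri G : ℤ)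

/-- The graph obtained by the Ore composition of `G₁` (edge side, replaced edge `xy`) and
`G₂` (split side, split vertex `z`, with `A` the set of neighbours of `z` assigned to the
copy `z₁` identified with `x`). -/
def oreGraph {V₁ V₂ : Type*} (G₁ : SimpleGraph V₁) (x y : V₁) (G₂ : SimpleGraph V₂)
    (z : V₂) (A : Set V₂) : SimpleGraph (V₁ ⊕ {v : V₂ // v ≠ z}) :=
  SimpleGraph.fromRel (fun a b =>
    match a, b with
    | Sum.inl a, Sum.inl b => G₁.Adj a b ∧ ¬(a = x ∧ b = y) ∧ ¬(a = y ∧ b = x)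
    | Sum.inr a, Sum.inr b => G₂.Adj a.1 b.1
    | Sum.inl a, Sum.inr b => G₂.Adj z b.1 ∧ ((a = x ∧ b.1 ∈ A) ∨ (a = y ∧ b.1 ∉ A))
    | Sum.inr _, Sum.inl _ => False)

/-- `H` is an Ore composition of `G₁` and `G₂`: an edge `xy` of `G₁` is deleted, a vertex `z`
of `G₂` is split into two vertices of positive degree, which are identified with `x` and `y`. -/
def IsOreComposition {V₁ V₂ V₃ : Type*} (H : SimpleGraph V₃) (G₁ : SimpleGraph V₁)
    (G₂ : SimpleGraph V₂) : Prop :=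
  ∃ (x y : V₁) (z : V₂) (A : Set V₂), G₁.Adj x y ∧
    (A ∩ G₂.neighborSet z).Nonempty ∧ ((G₂.neighborSet z) \ A).Nonempty ∧
    Nonempty (H ≃g oreGraph G₁ x y G₂ z A)

/-- The 4-Ore graphs on vertex sets `Fin n`: obtained from copies of `K₄` by
repeated Ore compositions. -/
inductive FourOreAux : ∀ {n : ℕ}, SimpleGraph (Fin n) → Prop
  | k4 : FourOreAux (⊤ : SimpleGraph (Fin 4))
  | ore {n₁ n₂ n : ℕ} {G₁ : SimpleGraph (Fin n₁)} {G₂ : SimpleGraph (Fin n₂)}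
      {G : SimpleGraph (Fin n)} :
      FourOreAux G₁ → FourOreAux G₂ → IsOreComposition G G₁ G₂ → FourOreAux G

/-- A graph is 4-Ore if it is isomorphic to a 4-Ore graph on some `Fin n`. -/
def IsFourOre {V : Type*} (H : SimpleGraph V) : Prop :=
  ∃ (n : ℕ) (G : SimpleGraph (Fin n)), FourOreAux G ∧ Nonempty (H ≃g G)

/-- `G` contains `K₄` minus an edge as a subgraph (vertices `a,b` of degree three in it). -/
def HasK4MinusE {V : Type*} (G : SimpleGraph V) : Prop :=
  ∃ a b c d : V, a ≠ b ∧ a ≠ c ∧ a ≠ d ∧ b ≠ c ∧ b ≠ d ∧ c ≠ d ∧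
    G.Adj a b ∧ G.Adj a c ∧ G.Adj a d ∧ G.Adj b c ∧ G.Adj b d

/-- `a,b,c,d` form a diamond of `H`: a subgraph isomorphic to `K₄ - e` (with `a,b` its
degree-three vertices) such that `a` and `b` also have degree three in `H`. -/
def IsDiamond {V : Type*} (H : SimpleGraph V) (a b c d : V) : Prop :=
  a ≠ b ∧ a ≠ c ∧ a ≠ d ∧ b ≠ c ∧ b ≠ d ∧ c ≠ d ∧
  H.Adj a b ∧ H.Adj a c ∧ H.Adj a d ∧ H.Adj b c ∧ H.Adj b d ∧
  (H.neighborSet a).ncard = 3 ∧ (H.neighborSet b).ncard = 3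

/-- Splitting the vertex `v` of `G` into two vertices `Sum.inr 0` and `Sum.inr 1`, the
neighbours of `v` in `A` going to the first and the remaining neighbours to the second. -/
def splitGraph {V : Type*} (G : SimpleGraph V) (v : V) (A : Set V) :
    SimpleGraph ({u : V // u ≠ v} ⊕ Fin 2) :=
  SimpleGraph.fromRel (fun a b =>
    match a, b with
    | Sum.inl a, Sum.inl b => G.Adj a.1 b.1
    | Sum.inl a, Sum.inr i => G.Adj v a.1 ∧ ((i = 0 ∧ a.1 ∈ A) ∨ (i = 1 ∧ a.1 ∉ A))
    | _, _ => False)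

/-- The graph `T₈` of the paper. -/
def T8 : SimpleGraph (Fin 8) :=
  SimpleGraph.fromRel (fun a b => (a, b) ∈
    ([(0,1),(1,2),(2,0),(0,3),(3,6),(6,7),(7,3),(2,4),(4,6),(6,5),(5,1),(4,7),(7,5)] :
      List (Fin 8 × Fin 8)))

/-- The graph `T₁₁` of the paper. -/
def T11 : SimpleGraph (Fin 11) :=
  SimpleGraph.fromRel (fun a b => (a, b) ∈
    ([(0,8),(8,10),(10,9),(9,1),(8,9),(10,1),(1,2),(2,0),(0,3),(3,6),(6,7),(7,3),
      (2,4),(4,6),(6,5),(5,1),(4,7),(7,5)] : List (Fin 11 × Fin 11)))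

/-- The wheel `W₅`: a 5-cycle `0,…,4` together with a hub `5` adjacent to all of it. -/
def W5 : SimpleGraph (Fin 6) :=
  SimpleGraph.fromRel (fun a b => (a, b) ∈
    ([(0,1),(1,2),(2,3),(3,4),(4,0),(5,0),(5,1),(5,2),(5,3),(5,4)] : List (Fin 6 × Fin 6)))

/-- The exceptional 4-critical graphs: `K₄`, `H₇` (the 4-Ore graph on seven vertices),
`W₅`, `T₈`, `T₁₁`, and the 4-Ore graphs with `T = 3`. -/
def Exceptional {V : Type*} (G : SimpleGraph V) : Prop :=
  Nonempty (G ≃g (⊤ : SimpleGraph (Fin 4))) ∨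
  (∃ H₇ : SimpleGraph (Fin 7), IsFourOre H₇ ∧ Nonempty (G ≃g H₇)) ∨
  Nonempty (G ≃g W5) ∨ Nonempty (G ≃g T8) ∨ Nonempty (G ≃g T11) ∨
  (IsFourOre G ∧ maxTri G = 3)

/-- `G` is a minimum counterexample to the main theorem: a 4-critical graph with
`p(G) ≥ -1` which is not exceptional, such that every 4-critical graph on fewer vertices
satisfies the conclusion of the main theorem. -/
def MinCounterexample {V : Type*} (G : SimpleGraph V) : Prop :=
  FourCritical G ∧ -1 ≤ pot G ∧ ¬ Exceptional G ∧
  ∀ m : ℕ, m < Nat.card V → ∀ H : SimpleGraph (Fin m), FourCritical H →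
    Exceptional H ∨ pot H ≤ -2

/-- The φ-identification `G_φ(R)`: the color classes of `R` are identified to the three
vertices `Sum.inr i`, which form a triangle. -/
def identGraph {V : Type*} (G : SimpleGraph V) (R : Set V) (φ : V → Fin 3) :
    SimpleGraph ({v : V // v ∉ R} ⊕ Fin 3) :=
  SimpleGraph.fromRel (fun a b =>
    match a, b with
    | Sum.inl a, Sum.inl b => G.Adj a.1 b.1
    | Sum.inl a, Sum.inr i => ∃ r ∈ R, φ r = i ∧ G.Adj a.1 r
    | Sum.inr _, Sum.inr _ => True
    | Sum.inr _, Sum.inl _ => False)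


section FourOreAux

open Sum

variable {V W : Type*}

/-- A triangle in `G`. -/
def Tri {V : Type*} (G : SimpleGraph V) (a b c : V) : Prop :=
  G.Adj a b ∧ G.Adj a c ∧ G.Adj b c

/-- Every vertex is avoided by some triangle. -/
def ClaimA {V : Type*} (G : SimpleGraph V) : Prop :=
  ∀ z : V, ∃ a b c, Tri G a b c ∧ a ≠ z ∧ b ≠ z ∧ c ≠ z

/-- Every pair of vertices: some triangle misses one of them. -/
def ClaimB {V : Type*} (G : SimpleGraph V) : Prop :=
  ∀ p q : V, ∃ a b c, Tri G a b c ∧ (p ∉ ({a,b,c} : Set V) ∨ q ∉ ({a,b,c} : Set V))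

lemma tri_walk (G : SimpleGraph V) {a b c : V} (h : Tri G a b c) :
    ∃ (w : G.Walk a a), w.IsCycle ∧ w.length ≤ 4 ∧ {x | x ∈ w.support} = ({a,b,c} : Set V) := by
  obtain ⟨hab, hac, hbc⟩ := h
  refine ⟨Walk.cons hab (Walk.cons hbc (Walk.cons hac.symm Walk.nil)), ?_, ?_, ?_⟩
  · simp [Walk.isCycle_def, Walk.isTrail_def, hab.ne, hac.ne, hbc.ne, hab.ne', hac.ne', hbc.ne',
      Sym2.eq_iff]
  · simp
  · ext x; simp [or_comm, or_assoc, or_left_comm]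

lemma scs_tri {G : SimpleGraph V} {a b c : V} (h : Tri G a b c) :
    ShortCycleSet G ({a,b,c} : Set V) := by
  obtain ⟨w, h1, h2, h3⟩ := tri_walk G h
  exact ⟨a, w, h1, h2, h3⟩

lemma scs_nonempty {G : SimpleGraph V} {S : Set V} (h : ShortCycleSet G S) : S.Nonempty := by
  obtain ⟨v, w, _, _, rfl⟩ := h
  exact ⟨v, w.start_mem_support⟩

lemma scs_ncard {G : SimpleGraph V} {S : Set V} (h : ShortCycleSet G S) : 3 ≤ S.ncard := by
  classical
  obtain ⟨v, w, hc, _, rfl⟩ := h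
  have hset : {x | x ∈ w.support} = (w.support.toFinset : Set V) := by
    ext x; simp
  rw [hset, Set.ncard_coe_finset]
  have hnd : w.support.tail.Nodup := hc.2
  have hlen : 3 ≤ w.support.tail.length := by
    have h3 := hc.three_le_length
    have h4 : w.support.length = w.length + 1 := w.length_support
    have ht : w.support.tail.length = w.support.length - 1 := List.length_tail
    omega
  calc 3 ≤ w.support.tail.toFinset.card := by rw [List.toFinset_card_of_nodup hnd]; exact hlen
    _ ≤ w.support.toFinset.card := by
        apply Finset.card_le_card
        intro x hx
        simp only [List.mem_toFinset] at *
        exact List.mem_of_mem_tail hx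

lemma mem_le_card [Fintype V] {G : SimpleGraph V} {n : ℕ}
    (hn : n ∈ {n | ∃ C : Finset (Set V), C.card = n ∧ (∀ S ∈ C, ShortCycleSet G S) ∧
      (C : Set (Set V)).Pairwise Disjoint}) : n ≤ Fintype.card V := by
  classical
  obtain ⟨C, rfl, hS, hdisj⟩ := hn
  by_cases hV : Nonempty V
  · refine Finset.card_le_card_of_injOn
      (fun S => if h : S.Nonempty then h.some else Classical.arbitrary V)
      (fun _ _ => Finset.mem_univ _) ?_ |>.trans (le_of_eq (Finset.card_univ))
    intro S hSC T hTC hfeq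
    by_contra hne
    have hSne := scs_nonempty (hS S hSC)
    have hTne := scs_nonempty (hS T hTC)
    have hd := hdisj hSC hTC hne
    simp only at hfeq
    rw [dif_pos hSne, dif_pos hTne] at hfeq
    exact Set.disjoint_left.mp hd (hfeq ▸ hSne.some_mem) hTne.some_mem
  · rcases Finset.eq_empty_or_nonempty C with rfl | ⟨S, hSC⟩
    · simp
    · exact absurd ⟨(scs_nonempty (hS S hSC)).some⟩ hV

lemma bddAbove_mSet [Fintype V] (G : SimpleGraph V) :
    BddAbove {n | ∃ C : Finset (Set V), C.card = n ∧ (∀ S ∈ C, ShortCycleSet G S) ∧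
      (C : Set (Set V)).Pairwise Disjoint} :=
  ⟨Fintype.card V, fun _ hn => mem_le_card hn⟩

variable {V₁ V₂ : Type*} {G₁ : SimpleGraph V₁} {G₂ : SimpleGraph V₂} {x y : V₁} {z : V₂}
  {A : Set V₂}

lemma ore_adj_inr {a b : {v : V₂ // v ≠ z}} (h : G₂.Adj a.1 b.1) :
    (oreGraph G₁ x y G₂ z A).Adj (inr a) (inr b) := by
  refine (SimpleGraph.fromRel_adj _ _ _).mpr ⟨?_, Or.inl h⟩
  simp only [ne_eq, inr.injEq]
  exact fun hab => h.ne (by rw [hab])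

lemma ore_adj_inl {a b : V₁} (h : G₁.Adj a b) (h1 : ¬(a = x ∧ b = y)) (h2 : ¬(a = y ∧ b = x)) :
    (oreGraph G₁ x y G₂ z A).Adj (inl a) (inl b) := by
  refine (SimpleGraph.fromRel_adj _ _ _).mpr ⟨by simp [h.ne], Or.inl ⟨h, h1, h2⟩⟩

lemma tri_ore_inr {a b c : V₂} (h : Tri G₂ a b c) (ha : a ≠ z) (hb : b ≠ z) (hc : c ≠ z) :
    Tri (oreGraph G₁ x y G₂ z A) (inr ⟨a, ha⟩) (inr ⟨b, hb⟩) (inr ⟨c, hc⟩) :=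
  ⟨ore_adj_inr h.1, ore_adj_inr h.2.1, ore_adj_inr h.2.2⟩

lemma tri_ore_inl {a b c : V₁} (h : Tri G₁ a b c)
    (hxy : x ∉ ({a,b,c} : Set V₁) ∨ y ∉ ({a,b,c} : Set V₁)) :
    Tri (oreGraph G₁ x y G₂ z A) (inl a) (inl b) (inl c) := by
  have key : ∀ u v : V₁, u ∈ ({a,b,c} : Set V₁) → v ∈ ({a,b,c} : Set V₁) →
      ¬(u = x ∧ v = y) := by
    rintro u v hu hv ⟨rfl, rfl⟩
    rcases hxy with h' | h' <;> [exact h' hu; exact h' hv]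
  have ha : a ∈ ({a,b,c} : Set V₁) := by simp
  have hb : b ∈ ({a,b,c} : Set V₁) := by simp
  have hc : c ∈ ({a,b,c} : Set V₁) := by simp
  exact ⟨ore_adj_inl h.1 (key a b ha hb) (fun ⟨h1,h2⟩ => key b a hb ha ⟨h2,h1⟩),
    ore_adj_inl h.2.1 (key a c ha hc) (fun ⟨h1,h2⟩ => key c a hc ha ⟨h2,h1⟩),
    ore_adj_inl h.2.2 (key b c hb hc) (fun ⟨h1,h2⟩ => key c b hc hb ⟨h2,h1⟩)⟩

lemma claimA_ore (hA2 : ClaimA G₂) (hB1 : ClaimB G₁) :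
    ClaimA (oreGraph G₁ x y G₂ z A) := by
  rintro (w | w)
  · obtain ⟨a, b, c, htri, ha, hb, hc⟩ := hA2 z
    exact ⟨_, _, _, tri_ore_inr htri ha hb hc, by simp, by simp, by simp⟩
  · obtain ⟨a, b, c, htri, hxy⟩ := hB1 x y
    exact ⟨_, _, _, tri_ore_inl htri hxy, by simp, by simp, by simp⟩

lemma claimB_ore (hA2 : ClaimA G₂) (hB1 : ClaimB G₁) :
    ClaimB (oreGraph G₁ x y G₂ z A) := by
  rintro (p | p) (q | q)
  · obtain ⟨a, b, c, htri, ha, hb, hc⟩ := hA2 z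
    exact ⟨_, _, _, tri_ore_inr htri ha hb hc, Or.inl (by simp)⟩
  · obtain ⟨a, b, c, htri, hxy⟩ := hB1 x y
    exact ⟨_, _, _, tri_ore_inl htri hxy, Or.inr (by simp)⟩
  · obtain ⟨a, b, c, htri, hxy⟩ := hB1 x y
    exact ⟨_, _, _, tri_ore_inl htri hxy, Or.inl (by simp)⟩
  · obtain ⟨a, b, c, htri, hxy⟩ := hB1 x y
    exact ⟨_, _, _, tri_ore_inl htri hxy, Or.inl (by simp)⟩

lemma tri_of_iso {G : SimpleGraph V} {O : SimpleGraph W} (f : G ≃g O) {a b c : W}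
    (h : Tri O a b c) : Tri G (f.symm a) (f.symm b) (f.symm c) :=
  ⟨f.symm.map_adj_iff.mpr h.1, f.symm.map_adj_iff.mpr h.2.1, f.symm.map_adj_iff.mpr h.2.2⟩

lemma claimA_of_iso {G : SimpleGraph V} {O : SimpleGraph W} (f : G ≃g O) (hO : ClaimA O) :
    ClaimA G := by
  intro w
  obtain ⟨a, b, c, htri, ha, hb, hc⟩ := hO (f w)
  exact ⟨_, _, _, tri_of_iso f htri,
    fun h => ha ((f.apply_symm_apply a).symm.trans (congrArg f h)),
    fun h => hb ((f.apply_symm_apply b).symm.trans (congrArg f h)),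
    fun h => hc ((f.apply_symm_apply c).symm.trans (congrArg f h))⟩

lemma claimB_of_iso {G : SimpleGraph V} {O : SimpleGraph W} (f : G ≃g O) (hO : ClaimB O) :
    ClaimB G := by
  intro p q
  obtain ⟨a, b, c, htri, hpq⟩ := hO (f p) (f q)
  have key : ∀ (r : V), f r ∉ ({a,b,c} : Set W) →
      r ∉ ({f.symm a, f.symm b, f.symm c} : Set V) := by
    intro r h hmem
    apply h
    simp only [Set.mem_insert_iff, Set.mem_singleton_iff] at hmem ⊢
    rcases hmem with h' | h' | h'
    · left; rw [h', f.apply_symm_apply]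
    · right; left; rw [h', f.apply_symm_apply]
    · right; right; rw [h', f.apply_symm_apply]
  refine ⟨_, _, _, tri_of_iso f htri, ?_⟩
  rcases hpq with h | h
  · exact Or.inl (key p h)
  · exact Or.inr (key q h)

lemma claimA_K4 : ClaimA (⊤ : SimpleGraph (Fin 4)) := by
  simp only [ClaimA, Tri, top_adj]
  decide

lemma claimB_K4 : ClaimB (⊤ : SimpleGraph (Fin 4)) := by
  simp only [ClaimB, Tri, top_adj, Set.mem_insert_iff, Set.mem_singleton_iff]
  decide

lemma fourOreAux_claims : ∀ {n : ℕ} {G : SimpleGraph (Fin n)}, FourOreAux G →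
    ClaimA G ∧ ClaimB G := by
  intro n G hG
  induction hG with
  | k4 => exact ⟨claimA_K4, claimB_K4⟩
  | ore h1 h2 hcomp ih1 ih2 =>
    obtain ⟨x, y, z, A, hxy, hA1, hA2, ⟨f⟩⟩ := hcomp
    exact ⟨claimA_of_iso f (claimA_ore ih2.1 ih1.2),
      claimB_of_iso f (claimB_ore ih2.1 ih1.2)⟩

end FourOreAux

/-- For a 4-Ore graph `H`, `T(H) = 1` if and only if `H` is isomorphic to `K₄`. -/
theorem fourOre_T_eq_one_iff {V : Type*} (H : SimpleGraph V) (hH : IsFourOre H) :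
    maxTri H = 1 ↔ Nonempty (H ≃g (⊤ : SimpleGraph (Fin 4))) := by
  classical
  obtain ⟨n, G, hG, ⟨e⟩⟩ := hH
  constructor
  · intro h1
    cases hG with
    | k4 => exact ⟨e⟩
    | @ore n₁ n₂ _ G₁ G₂ _ hG1 hG2 hcomp =>
      exfalso
      obtain ⟨x, y, z, A, hxy, hA1, hA2, ⟨f⟩⟩ := hcomp
      haveI : Fintype V := Fintype.ofEquiv (Fin n) e.toEquiv.symm
      set g := e.trans f with hg
      obtain ⟨a, b, c, tri1, hxy'⟩ := (fourOreAux_claims hG1).2 x y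
      obtain ⟨a', b', c', tri2, ha', hb', hc'⟩ := (fourOreAux_claims hG2).1 z
      have T1 : Tri H (g.symm (Sum.inl a)) (g.symm (Sum.inl b)) (g.symm (Sum.inl c)) :=
        tri_of_iso g (tri_ore_inl tri1 hxy')
      have T2 : Tri H (g.symm (Sum.inr ⟨a', ha'⟩)) (g.symm (Sum.inr ⟨b', hb'⟩))
          (g.symm (Sum.inr ⟨c', hc'⟩)) :=
        tri_of_iso g (tri_ore_inr tri2 ha' hb' hc')
      set S : Set V := {g.symm (Sum.inl a), g.symm (Sum.inl b), g.symm (Sum.inl c)} with hS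
      set T : Set V := {g.symm (Sum.inr ⟨a', ha'⟩), g.symm (Sum.inr ⟨b', hb'⟩),
        g.symm (Sum.inr ⟨c', hc'⟩)} with hT
      have hinj : Function.Injective g.symm := g.symm.toEquiv.injective
      have hdisj : Disjoint S T := by
        rw [Set.disjoint_left]
        intro u hu hv
        simp only [hS, hT, Set.mem_insert_iff, Set.mem_singleton_iff] at hu hv
        rcases hu with rfl | rfl | rfl <;> rcases hv with hv | hv | hv <;>
          exact absurd (hinj hv) (by simp)
      have hne : S ≠ T := by
        intro hST
        exact Set.disjoint_left.mp hdisj (show g.symm (Sum.inl a) ∈ S by simp [hS])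
          (hST ▸ (show g.symm (Sum.inl a) ∈ S by simp [hS]))
      have h2mem : 2 ∈ {m | ∃ C : Finset (Set V), C.card = m ∧ (∀ S ∈ C, ShortCycleSet H S) ∧
          (C : Set (Set V)).Pairwise Disjoint} := by
        refine ⟨{S, T}, Finset.card_pair hne, ?_, ?_⟩
        · intro U hU
          simp only [Finset.mem_insert, Finset.mem_singleton] at hU
          rcases hU with rfl | rfl
          · exact scs_tri T1
          · exact scs_tri T2
        · intro u hu v hv huv
          simp only [Finset.coe_insert, Finset.coe_singleton, Set.mem_insert_iff,
            Set.mem_singleton_iff] at hu hv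
          rcases hu with rfl | rfl <;> rcases hv with rfl | rfl
          · exact absurd rfl huv
          · exact hdisj
          · exact hdisj.symm
          · exact absurd rfl huv
      have h2le : 2 ≤ maxTri H := le_csSup (bddAbove_mSet H) h2mem
      omega
  · rintro ⟨e4⟩
    haveI : Fintype V := Fintype.ofEquiv (Fin 4) e4.toEquiv.symm
    have hcard : Fintype.card V = 4 := by
      rw [Fintype.card_congr e4.toEquiv, Fintype.card_fin]
    have tri : Tri H (e4.symm 0) (e4.symm 1) (e4.symm 2) := by
      refine ⟨?_, ?_, ?_⟩ <;> exact e4.symm.map_adj_iff.mpr (by simp)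
    have h1mem : 1 ∈ {m | ∃ C : Finset (Set V), C.card = m ∧ (∀ S ∈ C, ShortCycleSet H S) ∧
        (C : Set (Set V)).Pairwise Disjoint} := by
      refine ⟨{({e4.symm 0, e4.symm 1, e4.symm 2} : Set V)}, Finset.card_singleton _, ?_, ?_⟩
      · intro U hU
        simp only [Finset.mem_singleton] at hU
        subst hU
        exact scs_tri tri
      · simp
    have hub : ∀ m ∈ {m | ∃ C : Finset (Set V), C.card = m ∧ (∀ S ∈ C, ShortCycleSet H S) ∧
        (C : Set (Set V)).Pairwise Disjoint}, m ≤ 1 := by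
      rintro m ⟨C, rfl, hS, hdisj⟩
      by_contra hgt
      push_neg at hgt
      obtain ⟨S, T, hSC, hTC, hne⟩ := Finset.one_lt_card_iff.mp hgt
      have hd : Disjoint S T := hdisj (Finset.mem_coe.mpr hSC) (Finset.mem_coe.mpr hTC) hne
      have h3S := scs_ncard (hS S hSC)
      have h3T := scs_ncard (hS T hTC)
      have hfin : (S ∪ T).Finite := Set.toFinite _
      have hU : (S ∪ T).ncard = S.ncard + T.ncard :=
        Set.ncard_union_eq hd (Set.toFinite _) (Set.toFinite _)
      have hle : (S ∪ T).ncard ≤ 4 := by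
        calc (S ∪ T).ncard ≤ (Set.univ : Set V).ncard :=
              Set.ncard_le_ncard (Set.subset_univ _) Set.finite_univ
          _ = 4 := by rw [Set.ncard_univ, Nat.card_eq_fintype_card, hcard]
      omega
    exact IsGreatest.csSup_eq ⟨h1mem, hub⟩
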